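/- Let V be a 3-dimensional vector space over a field F with |F| ≥ 5 and characteristic ≠ 2, carrying a nondegenerate symmetric bilinear form. Then the collinearity graph on nondegenerate 1-dimensional subspaces, with adjacency given by spanning a nondegenerate 2-dimensional subspace, is connected of diameter at most two. -/

import Mathlib

open Module Polynomial

section Helpers

variable {F V : Type*} [Field F] [AddCommGroup V] [Module F V]

-- polynomial helper: find s avoiding two quadratic conditions
lemma exists_good_s (hF : 5 ≤ Cardinal.mk F) {u₁ v₁ u₂ v₂ : F}
    (h1 : u₁ ≠ 0 ∨ v₁ ≠ 0) (h2 : u₂ ≠ 0 ∨ v₂ ≠ 0) :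
    ∃ s : F, u₁ * s ^ 2 + v₁ ≠ 0 ∧ u₂ * s ^ 2 + v₂ ≠ 0 := by
  have key : ∀ u v : F, u ≠ 0 ∨ v ≠ 0 → (C u * X ^ 2 + C v : F[X]) ≠ 0 := by
    intro u v huv h
    rcases huv with hu | hv
    · have := congrArg (fun p => Polynomial.coeff p 2) h
      simp [coeff_add, coeff_C_mul, coeff_X_pow, coeff_C] at this
      exact hu this
    · have := congrArg (fun p => Polynomial.coeff p 0) h
      simp [coeff_add, coeff_C_mul, coeff_X_pow, coeff_C] at this
      exact hv this
  set p : F[X] := (C u₁ * X ^ 2 + C v₁) * (C u₂ * X ^ 2 + C v₂) with hp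
  have hp0 : p ≠ 0 := mul_ne_zero (key _ _ h1) (key _ _ h2)
  have hdeg : p.natDegree ≤ 4 := by
    rw [hp]
    compute_degree
  have hcard : (p.natDegree : Cardinal) < Cardinal.mk F := by
    calc (p.natDegree : Cardinal) ≤ (4 : ℕ) := by exact_mod_cast hdeg
    _ < (5 : ℕ) := by exact_mod_cast (by norm_num : (4:ℕ) < 5)
    _ ≤ Cardinal.mk F := by exact_mod_cast hF
  obtain ⟨s, hs⟩ := p.exists_eval_ne_zero_of_natDegree_lt_card hp0 hcard
  rw [hp] at hs
  simp only [eval_mul, eval_add, eval_pow, eval_C, eval_X, mul_ne_zero_iff] at hs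
  exact ⟨s, hs⟩

lemma exists_good_lin (hF : 5 ≤ Cardinal.mk F) {u₁ v₁ u₂ v₂ : F}
    (h1 : u₁ ≠ 0) (h2 : u₂ ≠ 0) :
    ∃ s : F, u₁ * s + v₁ ≠ 0 ∧ u₂ * s + v₂ ≠ 0 := by
  have key : ∀ u v : F, u ≠ 0 → (C u * X + C v : F[X]) ≠ 0 := by
    intro u v hu h
    have := congrArg (fun p => Polynomial.coeff p 1) h
    simp [coeff_add, coeff_C_mul, coeff_C] at this
    exact hu this
  set p : F[X] := (C u₁ * X + C v₁) * (C u₂ * X + C v₂) with hp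
  have hp0 : p ≠ 0 := mul_ne_zero (key _ _ h1) (key _ _ h2)
  have hdeg : p.natDegree ≤ 4 := by
    rw [hp]
    compute_degree
    norm_num
  have hcard : (p.natDegree : Cardinal) < Cardinal.mk F := by
    calc (p.natDegree : Cardinal) ≤ (4 : ℕ) := by exact_mod_cast hdeg
    _ < (5 : ℕ) := by exact_mod_cast (by norm_num : (4:ℕ) < 5)
    _ ≤ Cardinal.mk F := by exact_mod_cast hF
  obtain ⟨s, hs⟩ := p.exists_eval_ne_zero_of_natDegree_lt_card hp0 hcard
  rw [hp] at hs
  simp only [eval_mul, eval_add, eval_C, eval_X, mul_ne_zero_iff] at hs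
  exact ⟨s, hs⟩

/-- An anisotropic vector spans a vertex. -/
lemma vertex_of_aniso (B : LinearMap.BilinForm F V) {a : V} (ha : B a a ≠ 0) :
    finrank F (Submodule.span F {a} : Submodule F V) = 1 ∧
      (B.restrict (Submodule.span F ({a} : Set V))).Nondegenerate := by
  have ha0 : a ≠ 0 := by rintro rfl; simp at ha
  refine ⟨finrank_span_singleton ha0, ?_⟩
  refine ⟨?_, ?_⟩ <;> rintro ⟨x, hx⟩ h <;>
  · obtain ⟨s, rfl⟩ := Submodule.mem_span_singleton.mp hx
    have h1 := h ⟨a, Submodule.mem_span_singleton_self a⟩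
    simp only [LinearMap.BilinForm.restrict_apply, LinearMap.domRestrict_apply, map_smul,
      LinearMap.smul_apply, smul_eq_mul] at h1
    have hs : s = 0 := by
      rcases mul_eq_zero.mp h1 with h | h
      · exact h
      · exact absurd h ha
    subst hs
    simp

/-- Generator of a vertex. -/
lemma vertex_gen (B : LinearMap.BilinForm F V) [FiniteDimensional F V]
    {P : Submodule F V} (h1 : finrank F P = 1) (hnd : (B.restrict P).Nondegenerate) :
    ∃ a : V, P = Submodule.span F {a} ∧ B a a ≠ 0 := by
  have : Nontrivial P := Module.nontrivial_of_finrank_pos (by omega : 0 < finrank F P)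
  obtain ⟨⟨a, haP⟩, ha0⟩ := exists_ne (0 : P)
  have ha0' : a ≠ 0 := by simpa [Submodule.mk_eq_zero] using ha0
  have hle : Submodule.span F {a} ≤ P := (Submodule.span_singleton_le_iff_mem a P).mpr haP
  have heq : Submodule.span F {a} = P :=
    Submodule.eq_of_le_of_finrank_le hle (by rw [h1, finrank_span_singleton ha0'])
  refine ⟨a, heq.symm, fun haa => ?_⟩
  have : (⟨a, haP⟩ : P) = 0 := by
    apply hnd.1
    rintro ⟨y, hy⟩
    rw [← heq] at hy
    obtain ⟨t, rfl⟩ := Submodule.mem_span_singleton.mp hy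
    simp only [LinearMap.BilinForm.restrict_apply, LinearMap.domRestrict_apply, map_smul, smul_eq_mul, haa, mul_zero]
  exact ha0' (by simpa [Submodule.mk_eq_zero] using this)

lemma solve2 (B : LinearMap.BilinForm F V) {a c : V}
    (hc : B c c ≠ 0) (hg : B a a * B c c - B a c * B a c ≠ 0) {s t : F}
    (h1 : s * B a a + t * B a c = 0) (h2 : s * B a c + t * B c c = 0) :
    s = 0 ∧ t = 0 := by
  have hs : s * (B a a * B c c - B a c * B a c) = 0 := by
    linear_combination B c c * h1 - B a c * h2
  have hs0 : s = 0 := by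
    rcases mul_eq_zero.mp hs with h | h
    · exact h
    · exact absurd h hg
  subst hs0
  have ht : t * B c c = 0 := by linear_combination h2
  rcases mul_eq_zero.mp ht with h | h
  · exact ⟨rfl, h⟩
  · exact absurd h hc

lemma gram_edge (B : LinearMap.BilinForm F V) (hsymm : B.IsSymm) {a c : V}
    (_ha : B a a ≠ 0) (hc : B c c ≠ 0)
    (hg : B a a * B c c - B a c * B a c ≠ 0) :
    Submodule.span F ({a} : Set V) ≠ Submodule.span F ({c} : Set V) ∧
      finrank F (Submodule.span F ({a} : Set V) ⊔ Submodule.span F ({c} : Set V) :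
        Submodule F V) = 2 ∧
      (B.restrict (Submodule.span F ({a} : Set V) ⊔ Submodule.span F ({c} : Set V))).Nondegenerate := by
  have hca : B c a = B a c := hsymm.eq c a
  have key : ∀ s t : F, B (s • a + t • c) a = 0 → B (s • a + t • c) c = 0 → s = 0 ∧ t = 0 := by
    intro s t h1 h2
    simp only [map_add, map_smul, LinearMap.add_apply, LinearMap.smul_apply, smul_eq_mul] at h1 h2
    rw [hca] at h1
    exact solve2 B hc hg h1 h2
  have hli : LinearIndependent F ![a, c] := by
    rw [LinearIndependent.pair_iff]
    intro s t hst
    exact key s t (by rw [hst]; simp) (by rw [hst]; simp)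
  have hsup : (Submodule.span F ({a} : Set V) ⊔ Submodule.span F ({c} : Set V)) =
      Submodule.span F ({a, c} : Set V) := by
    rw [Submodule.span_insert]
  have hrank : finrank F (Submodule.span F ({a} : Set V) ⊔ Submodule.span F ({c} : Set V) :
      Submodule F V) = 2 := by
    rw [hsup, show ({a, c} : Set V) = Set.range ![a, c] by
      simp [Matrix.range_cons, Matrix.range_empty, Set.pair_comm]]
    have := finrank_span_eq_card hli
    simpa using this
  refine ⟨?_, hrank, ?_⟩
  · intro h
    have hc0 : c ∈ Submodule.span F ({a} : Set V) := h ▸ Submodule.mem_span_singleton_self c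
    obtain ⟨s, rfl⟩ := Submodule.mem_span_singleton.mp hc0
    obtain ⟨-, h1⟩ := key (-s) 1 (by simp) (by simp)
    exact one_ne_zero h1
  · refine ⟨?_, ?_⟩
    · rintro ⟨x, hx⟩ h
      rw [Submodule.mem_sup] at hx
      obtain ⟨u, hu, w, hw, rfl⟩ := hx
      obtain ⟨s, rfl⟩ := Submodule.mem_span_singleton.mp hu
      obtain ⟨t, rfl⟩ := Submodule.mem_span_singleton.mp hw
      have hma : a ∈ (Submodule.span F ({a} : Set V) ⊔ Submodule.span F ({c} : Set V)) :=
        le_sup_left (α := Submodule F V) (Submodule.mem_span_singleton_self a)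
      have hmc : c ∈ (Submodule.span F ({a} : Set V) ⊔ Submodule.span F ({c} : Set V)) :=
        le_sup_right (α := Submodule F V) (Submodule.mem_span_singleton_self c)
      have h1 := h ⟨a, hma⟩
      have h2 := h ⟨c, hmc⟩
      simp only [LinearMap.BilinForm.restrict_apply, LinearMap.domRestrict_apply] at h1 h2
      obtain ⟨hs, ht⟩ := key s t h1 h2
      subst hs; subst ht
      simp
    · rintro ⟨x, hx⟩ h
      rw [Submodule.mem_sup] at hx
      obtain ⟨u, hu, w, hw, rfl⟩ := hx
      obtain ⟨s, rfl⟩ := Submodule.mem_span_singleton.mp hu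
      obtain ⟨t, rfl⟩ := Submodule.mem_span_singleton.mp hw
      have hma : a ∈ (Submodule.span F ({a} : Set V) ⊔ Submodule.span F ({c} : Set V)) :=
        le_sup_left (α := Submodule F V) (Submodule.mem_span_singleton_self a)
      have hmc : c ∈ (Submodule.span F ({a} : Set V) ⊔ Submodule.span F ({c} : Set V)) :=
        le_sup_right (α := Submodule F V) (Submodule.mem_span_singleton_self c)
      have h1 := h ⟨a, hma⟩
      have h2 := h ⟨c, hmc⟩
      simp only [LinearMap.BilinForm.restrict_apply, LinearMap.domRestrict_apply] at h1 h2
      rw [hsymm.eq a] at h1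
      rw [hsymm.eq c] at h2
      obtain ⟨hs, ht⟩ := key s t h1 h2
      subst hs; subst ht
      simp

lemma exists_mid (h2 : (2 : F) ≠ 0) (hF : 5 ≤ Cardinal.mk F) (hdim : finrank F V = 3)
    (B : LinearMap.BilinForm F V) (hsymm : B.IsSymm) (hB : B.Nondegenerate)
    {a b : V} (ha : B a a ≠ 0) (hb : B b b ≠ 0)
    (hab : b ∉ Submodule.span F ({a} : Set V)) :
    ∃ c, B c c ≠ 0 ∧ B a a * B c c - B a c * B a c ≠ 0 ∧
      B b b * B c c - B b c * B b c ≠ 0 := by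
  haveI : FiniteDimensional F V := Module.finite_of_finrank_eq_succ hdim
  have hsym : ∀ x y : V, B x y = B y x := fun x y => hsymm.eq x y
  set α : F := B a b / B a a with hα
  set b' : V := b - α • a with hb'
  have hab' : B a b' = 0 := by
    rw [hb']
    simp only [map_sub, map_smul, smul_eq_mul]
    field_simp [hα]
    rw [hα, div_mul_cancel₀ _ ha, sub_self]
  have hb'a : B b' a = 0 := by rw [hsym b' a]; exact hab'
  have hb'0 : b' ≠ 0 := by
    intro h
    apply hab
    have : b = α • a := by rw [hb'] at h; linear_combination (norm := abel) h
    rw [this]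
    exact Submodule.smul_mem _ _ (Submodule.mem_span_singleton_self a)
  have hbdef : b = α • a + b' := by rw [hb']; abel
  have hQb : B b b = α ^ 2 * B a a + B b' b' := by
    conv_lhs => rw [hbdef]
    simp only [map_add, map_smul, LinearMap.add_apply, LinearMap.smul_apply, smul_eq_mul,
      hab', hb'a]
    ring
  by_cases hβ : B b' b' ≠ 0
  · -- Case A : b' anisotropic; find d ⟂ a, b' with B d d ≠ 0
    set φ : V →ₗ[F] F × F := (B a).prod (B b') with hφ
    have hker : LinearMap.ker φ ≠ ⊥ := by
      intro h
      have h1 := LinearMap.finrank_range_add_finrank_ker φ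
      rw [h, finrank_bot, add_zero, hdim] at h1
      have h3 : finrank F (LinearMap.range φ) ≤ finrank F (F × F) :=
        Submodule.finrank_le _
      rw [h1] at h3
      simp [Module.finrank_prod, Module.finrank_self] at h3
    obtain ⟨d, hdker, hd0⟩ := Submodule.exists_mem_ne_zero_of_ne_bot hker
    have had : B a d = 0 ∧ B b' d = 0 := by
      have := LinearMap.mem_ker.mp hdker
      rw [hφ, LinearMap.prod_apply] at this
      exact ⟨congrArg Prod.fst this, congrArg Prod.snd this⟩
    obtain ⟨had, hb'd⟩ := had
    have hda : B d a = 0 := by rw [hsym d a]; exact had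
    have hdb' : B d b' = 0 := by rw [hsym d b']; exact hb'd
    have hQd : B d d ≠ 0 := by
      intro hQd0
      -- a, b', d span V
      have hli : LinearIndependent F ![a, b', d] := by
        rw [Fintype.linearIndependent_iff]
        intro g hg
        rw [Fin.sum_univ_three] at hg
        simp only [Matrix.cons_val_zero, Matrix.cons_val_one, Matrix.head_cons,
          Matrix.cons_val_two, Matrix.tail_cons] at hg
        have e0 : g 0 = 0 := by
          have := congrArg (B a) hg
          simpa [map_add, map_smul, hab', had, smul_eq_mul, ha] using this
        have e1 : g 1 = 0 := by
          have := congrArg (B b') hg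
          simpa [map_add, map_smul, hb'a, hb'd, smul_eq_mul, hβ] using this
        have e2 : g 2 = 0 := by
          rw [e0, e1] at hg
          simp only [zero_smul, zero_add] at hg
          rcases smul_eq_zero.mp hg with h | h
          · exact h
          · exact absurd h hd0
        intro i; fin_cases i <;> assumption
      have hspan : Submodule.span F (Set.range ![a, b', d]) = ⊤ := by
        apply Submodule.eq_top_of_finrank_eq
        rw [finrank_span_eq_card hli, hdim]
        simp
      have hflip : B.flip d = 0 := by
        apply LinearMap.ext_on hspan
        rintro x ⟨i, rfl⟩
        fin_cases i <;>
          simp [LinearMap.flip_apply, had, hb'd, hQd0]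
      exact hd0 (hB.1 d (fun n => by
        rw [hsym d n]
        have := congrFun (congrArg DFunLike.coe hflip) n
        simpa using this))
    -- now split on B a b
    by_cases hαz : B a b = 0
    · refine ⟨d, hQd, ?_, ?_⟩
      · rw [had]; ring_nf; exact mul_ne_zero ha hQd
      · have hbb' : b = b' := by rw [hb', hα, hαz]; simp
        rw [hbb', hb'd]
        ring_nf
        exact mul_ne_zero hβ hQd
    · have hαne : α ≠ 0 := by
        rw [hα]; exact div_ne_zero hαz ha
      obtain ⟨s, hs1, hs2⟩ := exists_good_s hF (u₁ := B b' b') (v₁ := B d d)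
        (u₂ := α ^ 2 * B a a * B b' b') (v₂ := B b b * B d d)
        (Or.inl hβ)
        (Or.inl (mul_ne_zero (mul_ne_zero (pow_ne_zero 2 hαne) ha) hβ))
      refine ⟨s • b' + d, ?_, ?_, ?_⟩ <;>
        [skip; skip; skip]
      case _ =>
        have hQc : B (s • b' + d) (s • b' + d) = B b' b' * s ^ 2 + B d d := by
          simp only [map_add, map_smul, LinearMap.add_apply, LinearMap.smul_apply,
            smul_eq_mul, hb'd, hdb']
          ring
        rw [hQc]; exact hs1
      case _ =>
        have hQc : B (s • b' + d) (s • b' + d) = B b' b' * s ^ 2 + B d d := by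
          simp only [map_add, map_smul, LinearMap.add_apply, LinearMap.smul_apply,
            smul_eq_mul, hb'd, hdb']
          ring
        have hBac : B a (s • b' + d) = 0 := by
          simp only [map_add, map_smul, smul_eq_mul, hab', had]
          ring
        rw [hQc, hBac]
        intro h
        exact (mul_ne_zero ha hs1) (by linear_combination h)
      case _ =>
        have hQc : B (s • b' + d) (s • b' + d) = B b' b' * s ^ 2 + B d d := by
          simp only [map_add, map_smul, LinearMap.add_apply, LinearMap.smul_apply,
            smul_eq_mul, hb'd, hdb']
          ring
        have hBbc : B b (s • b' + d) = s * B b' b' := by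
          conv_lhs => rw [hbdef]
          simp only [map_add, map_smul, LinearMap.add_apply, LinearMap.smul_apply,
            smul_eq_mul, hab', had, hb'd]
          ring
        rw [hQc, hBbc]
        intro h
        apply hs2
        linear_combination h - s ^ 2 * B b' b' * hQb
  · push_neg at hβ
    have hu : ∃ u, B b' u ≠ 0 := by
      by_contra h
      push_neg at h
      exact hb'0 (hB.1 b' h)
    obtain ⟨u, hu⟩ := hu
    set e : V := u - (B a u / B a a) • a with he
    have hae : B a e = 0 := by
      rw [he]
      simp only [map_sub, map_smul, smul_eq_mul]
      field_simp
      ring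
    have hea : B e a = 0 := by rw [hsym e a]; exact hae
    have hb'e : B b' e ≠ 0 := by
      rw [he]
      simp only [map_sub, map_smul, smul_eq_mul, hb'a]
      simpa using hu
    have heb' : B e b' = B b' e := hsym b' e ▸ rfl
    obtain ⟨s, hs1, hs2⟩ := exists_good_lin hF (u₁ := 2 * B b' e) (v₁ := B e e)
      (u₂ := 2 * B b' e * B b b) (v₂ := B e e * B b b - B b' e * B b' e)
      (mul_ne_zero h2 hb'e) (mul_ne_zero (mul_ne_zero h2 hb'e) hb)
    have hQc : B (s • b' + e) (s • b' + e) = 2 * B b' e * s + B e e := by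
      simp only [map_add, map_smul, LinearMap.add_apply, LinearMap.smul_apply,
        smul_eq_mul, hβ]
      rw [heb']
      ring
    have hBac : B a (s • b' + e) = 0 := by
      simp only [map_add, map_smul, smul_eq_mul, hab', hae]
      ring
    have hBbc : B b (s • b' + e) = B b' e := by
      conv_lhs => rw [hbdef]
      simp only [map_add, map_smul, LinearMap.add_apply, LinearMap.smul_apply,
        smul_eq_mul, hab', hae, hβ]
      ring
    refine ⟨s • b' + e, ?_, ?_, ?_⟩
    · rw [hQc]; exact hs1
    · rw [hQc, hBac]
      intro h
      exact (mul_ne_zero ha hs1) (by linear_combination h)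
    · rw [hQc, hBbc]
      intro h
      apply hs2
      linear_combination h

end Helpers

/-- The collinearity graph of the orthogonal geometry: vertices are the
nondegenerate 1-dimensional subspaces, and two distinct vertices are adjacent
iff together they span a nondegenerate 2-dimensional subspace. -/
def collinearityGraph {F V : Type*} [Field F] [AddCommGroup V] [Module F V]
    (B : LinearMap.BilinForm F V) :
    SimpleGraph {P : Submodule F V // finrank F P = 1 ∧ (B.restrict P).Nondegenerate} where
  Adj P Q := P ≠ Q ∧ finrank F (P.1 ⊔ Q.1 : Submodule F V) = 2 ∧
    (B.restrict (P.1 ⊔ Q.1)).Nondegenerate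
  symm := by
    constructor
    rintro P Q ⟨hne, hdim, hnd⟩
    exact ⟨hne.symm, by rwa [sup_comm], by rwa [sup_comm]⟩
  loopless := by constructor; rintro P ⟨hne, -, -⟩; exact hne rfl

/-- For a 3-dimensional vector space over a field `F` with `|F| ≥ 5` and
characteristic ≠ 2, carrying a nondegenerate symmetric bilinear form, the
collinearity graph on nondegenerate 1-dimensional subspaces (adjacency: spanning a
nondegenerate 2-dimensional subspace) is connected of diameter at most two. -/
theorem orthogonal_collinearity_dim3_connected
    {F V : Type*} [Field F] [AddCommGroup V] [Module F V]
    (h2 : (2 : F) ≠ 0) (hF : 5 ≤ Cardinal.mk F) (hdim : finrank F V = 3)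
    (B : LinearMap.BilinForm F V) (hsymm : B.IsSymm) (hB : B.Nondegenerate) :
    (collinearityGraph B).Connected ∧ (collinearityGraph B).ediam ≤ 2 := by
  haveI : FiniteDimensional F V := Module.finite_of_finrank_eq_succ hdim
  haveI : Nontrivial V := Module.nontrivial_of_finrank_pos
    (R := F) (by rw [hdim]; norm_num)
  haveI : Invertible (2 : F) := invertibleOfNonzero h2
  have hB0 : B ≠ 0 := by
    intro h
    obtain ⟨v, hv⟩ := exists_ne (0 : V)
    exact hv (hB.1 v (fun n => by rw [h]; rfl))
  obtain ⟨x, hx⟩ := LinearMap.BilinForm.exists_bilinForm_self_ne_zero hB0 (LinearMap.BilinForm.isSymm_iff.mp hsymm)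
  have hx : B x x ≠ 0 := hx
  haveI hne : Nonempty
      {P : Submodule F V // finrank F P = 1 ∧ (B.restrict P).Nondegenerate} :=
    ⟨⟨Submodule.span F {x}, vertex_of_aniso B hx⟩⟩
  have key : ∀ P Q : {P : Submodule F V //
      finrank F P = 1 ∧ (B.restrict P).Nondegenerate},
      (collinearityGraph B).edist P Q ≤ 2 := by
    intro P Q
    by_cases hPQ : P = Q
    · subst hPQ
      rw [SimpleGraph.edist_self]
      norm_num
    · obtain ⟨a, hPa, ha⟩ := vertex_gen B P.2.1 P.2.2
      obtain ⟨b, hQb, hb⟩ := vertex_gen B Q.2.1 Q.2.2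
      have ha0 : a ≠ 0 := by rintro rfl; simp at ha
      have hb0 : b ≠ 0 := by rintro rfl; simp at hb
      have hab : b ∉ Submodule.span F ({a} : Set V) := by
        intro hmem
        apply hPQ
        apply Subtype.ext
        rw [hPa, hQb]
        have hle : Submodule.span F ({b} : Set V) ≤ Submodule.span F ({a} : Set V) :=
          (Submodule.span_singleton_le_iff_mem b _).mpr hmem
        exact (Submodule.eq_of_le_of_finrank_le hle
          (by rw [finrank_span_singleton hb0, finrank_span_singleton ha0])).symm
      obtain ⟨c, hc, hgac, hgbc⟩ := exists_mid h2 hF hdim B hsymm hB ha hb hab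
      obtain ⟨hne1, hd1, hn1⟩ := gram_edge B hsymm ha hc hgac
      obtain ⟨hne2, hd2, hn2⟩ := gram_edge B hsymm hb hc hgbc
      set R : {P : Submodule F V // finrank F P = 1 ∧ (B.restrict P).Nondegenerate} :=
        ⟨Submodule.span F {c}, vertex_of_aniso B hc⟩ with hR
      have hPR : (collinearityGraph B).Adj P R := by
        refine ⟨?_, ?_, ?_⟩
        · intro h
          apply hne1
          rw [← hPa]
          exact congrArg Subtype.val h
        · show finrank F (P.1 ⊔ R.1 : Submodule F V) = 2
          rw [hR, hPa]
          exact hd1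
        · show (B.restrict (P.1 ⊔ R.1)).Nondegenerate
          rw [hR, hPa]
          exact hn1
      have hQR : (collinearityGraph B).Adj Q R := by
        refine ⟨?_, ?_, ?_⟩
        · intro h
          apply hne2
          rw [← hQb]
          exact congrArg Subtype.val h
        · show finrank F (Q.1 ⊔ R.1 : Submodule F V) = 2
          rw [hR, hQb]
          exact hd2
        · show (B.restrict (Q.1 ⊔ R.1)).Nondegenerate
          rw [hR, hQb]
          exact hn2
      have hle := SimpleGraph.Walk.edist_le
        (SimpleGraph.Walk.cons hPR (SimpleGraph.Walk.cons hQR.symm SimpleGraph.Walk.nil))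
      simpa using hle
  refine ⟨SimpleGraph.Connected.mk (fun u v => ?_), SimpleGraph.ediam_le_of_edist_le key⟩
  exact SimpleGraph.reachable_of_edist_ne_top
    (lt_of_le_of_lt (key u v) (by exact lt_top_iff_ne_top.mpr (by decide) : (2 : ℕ∞) < ⊤)).ne
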